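/- Let ((h_i, η_i))_{i≥1} be i.i.d. pairs where h_i ≥ 0 is an integrable real random variable independent of η_i, and η_i is a real random variable symmetric about 0 with characteristic function φ_η. Then for every ω ∈ ℝ, (1/L)·∑_{i=1}^L h_i·e^{iωη_i} → E[h₁]·φ_η(ω) almost surely as L → ∞. Consequently, over a fading multiple access channel with received signal y_L = √(P_T/L)·∑_{i=1}^L h_i·e^{iω(θ + η_i)} + v, the normalized output z_L = y_L/√L converges almost surely to e^{iωθ}·√P_T·E[h₁]·φ_η(ω), so fading does not affect the strong consistency of the constant-modulus estimator whenever E[h₁] > 0 and φ_η(ω) ≠ 0. -/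

import Mathlib

open MeasureTheory ProbabilityTheory Filter Topology

/-- Over a fading multiple access channel with i.i.d. pairs `(h_i, η_i)`, where
the nonnegative integrable fading amplitude `h_i` is independent of the
symmetric sensing noise `η_i`, the normalized channel output converges almost
surely: `(1/L) ∑ h_i e^{iωη_i} → E[h₁] φ_η(ω)`, and consequently
`z_L = e^{iωθ} √P_T (1/L) ∑ h_i e^{iωη_i} + v/√L` converges almost surely to
`e^{iωθ} √P_T E[h₁] φ_η(ω)`, so fading does not affect strong consistency. -/
theorem fading_does_not_affect_consistency
    {Ω : Type*} [MeasureSpace Ω] [IsProbabilityMeasure (ℙ : Measure Ω)]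
    (h η : ℕ → Ω → ℝ)
    (hmeash : ∀ i, Measurable (h i)) (hmeasη : ∀ i, Measurable (η i))
    (hindep : iIndepFun (fun i a => (h i a, η i a)) ℙ)
    (hident : ∀ i, IdentDistrib (fun a => (h i a, η i a))
      (fun a => (h 0 a, η 0 a)) ℙ ℙ)
    (hpair : ∀ i, IndepFun (h i) (η i) ℙ)
    (hnonneg : ∀ i a, 0 ≤ h i a)
    (hint : Integrable (h 0) ℙ)
    (hsymm : ∀ i, IdentDistrib (η i) (fun a => -(η i a)) ℙ ℙ)
    (ω : ℝ) :
    (∀ᵐ a ∂ℙ, Tendsto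
        (fun L : ℕ => (L : ℂ)⁻¹ * ∑ i ∈ Finset.range L,
          (h i a : ℂ) * Complex.exp ((ω * η i a : ℝ) * Complex.I))
        atTop
        (𝓝 (((∫ a, h 0 a ∂ℙ : ℝ) : ℂ)
          * ∫ a, Complex.exp ((ω * η 0 a : ℝ) * Complex.I) ∂ℙ))) ∧
    ∀ θ PT : ℝ, 0 < PT → ∀ v : Ω → ℂ,
      ∀ᵐ a ∂ℙ, Tendsto
        (fun L : ℕ => Complex.exp ((ω * θ : ℝ) * Complex.I) * (Real.sqrt PT : ℂ) *
            ((L : ℂ)⁻¹ * ∑ i ∈ Finset.range L,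
              (h i a : ℂ) * Complex.exp ((ω * η i a : ℝ) * Complex.I))
          + v a / (Real.sqrt L : ℂ))
        atTop
        (𝓝 (Complex.exp ((ω * θ : ℝ) * Complex.I) * (Real.sqrt PT : ℂ) *
          (((∫ a, h 0 a ∂ℙ : ℝ) : ℂ)
            * ∫ a, Complex.exp ((ω * η 0 a : ℝ) * Complex.I) ∂ℙ))) := by
  -- The summands as complex random variables
  set X : ℕ → Ω → ℂ := fun i a =>
    (h i a : ℂ) * Complex.exp ((ω * η i a : ℝ) * Complex.I) with hXdef
  have measg : Measurable (fun p : ℝ × ℝ =>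
      (p.1 : ℂ) * Complex.exp ((ω * p.2 : ℝ) * Complex.I)) := by
    apply (Complex.measurable_ofReal.comp measurable_fst).mul
    exact Complex.measurable_exp.comp
      ((Complex.measurable_ofReal.comp (measurable_const.mul measurable_snd)).mul
        measurable_const)
  have measX : ∀ i, Measurable (X i) := fun i =>
    measg.comp ((hmeash i).prodMk (hmeasη i))
  have normX : ∀ i a, ‖X i a‖ = h i a := by
    intro i a
    rw [hXdef]
    simp only [norm_mul, Complex.norm_exp_ofReal_mul_I, mul_one, Complex.norm_real,
      Real.norm_eq_abs, abs_of_nonneg (hnonneg i a)]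
  have intX : Integrable (X 0) ℙ := by
    refine hint.mono (measX 0).aestronglyMeasurable ?_
    filter_upwards with a
    rw [normX 0 a, Real.norm_eq_abs]
    exact le_abs_self _
  have hindepX : Pairwise (Function.onFun (IndepFun · · ℙ) X) := fun i j hij =>
    (hindep.indepFun hij).comp measg measg
  have hidentX : ∀ i, IdentDistrib (X i) (X 0) ℙ ℙ := fun i =>
    (hident i).comp measg
  -- Compute the expectation of X 0
  have exp_eq : ∀ x : ℝ, Complex.exp ((x : ℝ) * Complex.I)
      = (Real.cos x : ℂ) + (Real.sin x : ℂ) * Complex.I := by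
    intro x
    rw [Complex.exp_mul_I, Complex.ofReal_cos, Complex.ofReal_sin]
  have int_cos : Integrable (fun a => Real.cos (ω * η 0 a)) ℙ := by
    refine Integrable.mono (integrable_const (1 : ℝ))
      (Real.measurable_cos.comp ((hmeasη 0).const_mul ω)).aestronglyMeasurable ?_
    filter_upwards with a
    simp [Real.abs_cos_le_one]
  have int_sin : Integrable (fun a => Real.sin (ω * η 0 a)) ℙ := by
    refine Integrable.mono (integrable_const (1 : ℝ))
      (Real.measurable_sin.comp ((hmeasη 0).const_mul ω)).aestronglyMeasurable ?_
    filter_upwards with a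
    simp [Real.abs_sin_le_one]
  have ofRealInt : ∀ (f : Ω → ℝ), Integrable f ℙ →
      Integrable (fun a => ((f a : ℝ) : ℂ)) ℙ := by
    intro f hf
    refine hf.mono (Complex.measurable_ofReal.comp_aemeasurable
      hf.aemeasurable).aestronglyMeasurable ?_
    filter_upwards with a
    simp
  have intOfReal : ∀ f : Ω → ℝ,
      (∫ a, ((f a : ℝ) : ℂ) ∂ℙ) = ((∫ a, f a ∂ℙ : ℝ) : ℂ) := fun f =>
    integral_ofReal
  have indc : IndepFun (h 0) (fun a => Real.cos (ω * η 0 a)) ℙ :=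
    (hpair 0).comp measurable_id (Real.measurable_cos.comp (measurable_const_mul ω))
  have inds : IndepFun (h 0) (fun a => Real.sin (ω * η 0 a)) ℙ :=
    (hpair 0).comp measurable_id (Real.measurable_sin.comp (measurable_const_mul ω))
  have Ic : ∫ a, h 0 a * Real.cos (ω * η 0 a) ∂ℙ
      = (∫ a, h 0 a ∂ℙ) * ∫ a, Real.cos (ω * η 0 a) ∂ℙ :=
    indc.integral_mul_eq_mul_integral (hmeash 0).aestronglyMeasurable
      (Real.measurable_cos.comp ((hmeasη 0).const_mul ω)).aestronglyMeasurable
  have Is : ∫ a, h 0 a * Real.sin (ω * η 0 a) ∂ℙ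
      = (∫ a, h 0 a ∂ℙ) * ∫ a, Real.sin (ω * η 0 a) ∂ℙ :=
    inds.integral_mul_eq_mul_integral (hmeash 0).aestronglyMeasurable
      (Real.measurable_sin.comp ((hmeasη 0).const_mul ω)).aestronglyMeasurable
  have int_hc : Integrable (fun a => h 0 a * Real.cos (ω * η 0 a)) ℙ := by
    refine hint.mono ((hmeash 0).mul
      (Real.measurable_cos.comp ((hmeasη 0).const_mul ω))).aestronglyMeasurable ?_
    filter_upwards with a
    rw [Real.norm_eq_abs, Real.norm_eq_abs, abs_mul]
    calc |h 0 a| * |Real.cos (ω * η 0 a)| ≤ |h 0 a| * 1 :=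
          mul_le_mul_of_nonneg_left (Real.abs_cos_le_one _) (abs_nonneg _)
      _ = |h 0 a| := mul_one _
  have int_hs : Integrable (fun a => h 0 a * Real.sin (ω * η 0 a)) ℙ := by
    refine hint.mono ((hmeash 0).mul
      (Real.measurable_sin.comp ((hmeasη 0).const_mul ω))).aestronglyMeasurable ?_
    filter_upwards with a
    rw [Real.norm_eq_abs, Real.norm_eq_abs, abs_mul]
    calc |h 0 a| * |Real.sin (ω * η 0 a)| ≤ |h 0 a| * 1 :=
          mul_le_mul_of_nonneg_left (Real.abs_sin_le_one _) (abs_nonneg _)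
      _ = |h 0 a| := mul_one _
  have exp_int : ∫ a, Complex.exp ((ω * η 0 a : ℝ) * Complex.I) ∂ℙ
      = ((∫ a, Real.cos (ω * η 0 a) ∂ℙ : ℝ) : ℂ)
        + ((∫ a, Real.sin (ω * η 0 a) ∂ℙ : ℝ) : ℂ) * Complex.I := by
    have : (fun a => Complex.exp ((ω * η 0 a : ℝ) * Complex.I))
        = fun a => ((Real.cos (ω * η 0 a) : ℂ))
          + ((Real.sin (ω * η 0 a) : ℂ)) * Complex.I := by
      funext a; exact exp_eq _
    rw [this, integral_add (ofRealInt _ int_cos) ((ofRealInt _ int_sin).mul_const Complex.I),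
      integral_mul_const, intOfReal, intOfReal]
  have key : ∫ a, X 0 a ∂ℙ = ((∫ a, h 0 a ∂ℙ : ℝ) : ℂ)
      * ∫ a, Complex.exp ((ω * η 0 a : ℝ) * Complex.I) ∂ℙ := by
    have : (fun a => X 0 a)
        = fun a => ((h 0 a * Real.cos (ω * η 0 a) : ℝ) : ℂ)
          + ((h 0 a * Real.sin (ω * η 0 a) : ℝ) : ℂ) * Complex.I := by
      funext a
      rw [hXdef]
      simp only
      rw [exp_eq]
      push_cast
      ring
    rw [this, integral_add (ofRealInt _ int_hc) ((ofRealInt _ int_hs).mul_const Complex.I),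
      integral_mul_const, intOfReal, intOfReal, Ic, Is, exp_int]
    push_cast
    ring
  -- Apply the strong law of large numbers
  have main : ∀ᵐ a ∂ℙ, Tendsto
      (fun L : ℕ => (L : ℂ)⁻¹ * ∑ i ∈ Finset.range L,
        (h i a : ℂ) * Complex.exp ((ω * η i a : ℝ) * Complex.I))
      atTop
      (𝓝 (((∫ a, h 0 a ∂ℙ : ℝ) : ℂ)
        * ∫ a, Complex.exp ((ω * η 0 a : ℝ) * Complex.I) ∂ℙ)) := by
    filter_upwards [strong_law_ae X intX hindepX hidentX] with a ha
    rw [← key]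
    convert ha using 2 with L
    rw [Complex.real_smul, Complex.ofReal_inv, Complex.ofReal_natCast]
  refine ⟨main, ?_⟩
  intro θ PT _hPT v
  filter_upwards [main] with a ha
  have h2 : Tendsto (fun L : ℕ => v a / (Real.sqrt L : ℂ)) atTop (𝓝 0) := by
    have hs : Tendsto (fun L : ℕ => Real.sqrt L) atTop atTop := by
      refine tendsto_atTop_atTop.2 fun b => ⟨⌈b⌉₊ ^ 2, fun L hL => ?_⟩
      calc b ≤ (⌈b⌉₊ : ℝ) := Nat.le_ceil b
        _ = Real.sqrt ((⌈b⌉₊ : ℝ) ^ 2) := (Real.sqrt_sq (by positivity)).symm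
        _ ≤ Real.sqrt L := Real.sqrt_le_sqrt (by exact_mod_cast hL)
    have hinv : Tendsto (fun L : ℕ => (Real.sqrt L)⁻¹) atTop (𝓝 0) :=
      hs.inv_tendsto_atTop
    have hinvC : Tendsto (fun L : ℕ => ((Real.sqrt L : ℝ) : ℂ)⁻¹) atTop (𝓝 0) := by
      have := (Complex.continuous_ofReal.tendsto 0).comp hinv
      simpa [Function.comp_def, Complex.ofReal_inv] using this
    have := hinvC.const_mul (v a)
    simpa [div_eq_mul_inv] using this
  have h1 : Tendsto (fun L : ℕ => Complex.exp ((ω * θ : ℝ) * Complex.I)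
      * (Real.sqrt PT : ℂ) * ((L : ℂ)⁻¹ * ∑ i ∈ Finset.range L,
        (h i a : ℂ) * Complex.exp ((ω * η i a : ℝ) * Complex.I)))
      atTop
      (𝓝 (Complex.exp ((ω * θ : ℝ) * Complex.I) * (Real.sqrt PT : ℂ) *
        (((∫ a, h 0 a ∂ℙ : ℝ) : ℂ)
          * ∫ a, Complex.exp ((ω * η 0 a : ℝ) * Complex.I) ∂ℙ))) :=
    ha.const_mul _
  simpa using h1.add h2
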